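/- For positive integers n and k, the number of partitions with perimeter n into 1-distinct (strictly decreasing) parts having exactly k parts equals the binomial coefficient C(n-k, k-1). -/

import Mathlib

/-- A partition: a nonempty, nonincreasing list of positive integers. -/
def IsPartition (l : List ℕ) : Prop :=
  l ≠ [] ∧ l.Pairwise (· ≥ ·) ∧ ∀ x ∈ l, 0 < x

/-- Perimeter: (largest part) + (number of parts) - 1. -/
def perimeter (l : List ℕ) : ℕ := l.headI + l.length - 1

/-- d-distinct: consecutive parts differ by at least d. -/
def DDistinct (d : ℕ) (l : List ℕ) : Prop := l.Chain' (fun x y => y + d ≤ x)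

instance : IsTrans ℕ (fun x y => y + 1 ≤ x) := ⟨fun _ _ _ h1 h2 => by omega⟩

lemma stmt3_fwd (n k : ℕ) (hk : 0 < k) (l : List ℕ)
    (hl : IsPartition l ∧ perimeter l = n ∧ DDistinct 1 l ∧ l.length = k) :
    l.tail.toFinset ∈ Finset.powersetCard (k-1) (Finset.Ico 1 (n-k+1)) ∧
      l = (n-k+1) :: Finset.sort l.tail.toFinset (· ≥ ·) := by
  obtain ⟨⟨hne, hsort, hpos⟩, hper, hdd, hlen⟩ := hl
  have hp : l.Pairwise (fun x y => y + 1 ≤ x) := List.isChain_iff_pairwise.mp hdd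
  obtain ⟨a, t, rfl⟩ : ∃ a t, l = a :: t := by
    cases l with
    | nil => exact absurd rfl hne
    | cons a t => exact ⟨a, t, rfl⟩
  rw [List.pairwise_cons] at hp
  obtain ⟨hat, hpt⟩ := hp
  have hnd : t.Nodup := hpt.imp (fun h => by omega)
  have hts : t.Pairwise (· ≥ ·) := hpt.imp (fun h => by omega)
  have hpos' : ∀ x ∈ t, 0 < x := fun x hx => hpos x (List.mem_cons_of_mem a hx)
  have hap : 0 < a := hpos a (List.mem_cons_self (a := a) (l := t))
  simp only [perimeter, List.headI, List.length_cons] at hper hlen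
  have ha : a = n - k + 1 := by omega
  have hsort_eq : Finset.sort t.toFinset (· ≥ ·) = t := (List.toFinset_sort _ hnd).mpr hts
  have hsub : t.toFinset ⊆ Finset.Ico 1 (n-k+1) := by
    intro x hx
    rw [List.mem_toFinset] at hx
    rw [Finset.mem_Ico]
    exact ⟨hpos' x hx, by have := hat x hx; omega⟩
  refine ⟨Finset.mem_powersetCard.mpr ⟨hsub, ?_⟩, ?_⟩
  · rw [List.tail_cons, List.toFinset_card_of_nodup hnd]; omega
  · simp [ha, hsort_eq]

lemma stmt3_bwd (n k : ℕ) (hk : 0 < k) (hkn : k ≤ n) (s : Finset ℕ)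
    (hs : s ∈ Finset.powersetCard (k-1) (Finset.Ico 1 (n-k+1))) :
    (IsPartition ((n-k+1) :: Finset.sort s (· ≥ ·)) ∧
      perimeter ((n-k+1) :: Finset.sort s (· ≥ ·)) = n ∧
      DDistinct 1 ((n-k+1) :: Finset.sort s (· ≥ ·)) ∧
      ((n-k+1) :: Finset.sort s (· ≥ ·)).length = k) := by
  obtain ⟨hsub, hcard⟩ := Finset.mem_powersetCard.mp hs
  have hmem : ∀ x ∈ Finset.sort s (· ≥ ·), 1 ≤ x ∧ x < n - k + 1 := by
    intro x hx
    rw [Finset.mem_sort] at hx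
    exact Finset.mem_Ico.mp (hsub hx)
  have hss : (Finset.sort s (· ≥ ·)).Pairwise (· ≥ ·) := Finset.pairwise_sort _ _
  have hnd : (Finset.sort s (· ≥ ·)).Nodup := Finset.sort_nodup _ _
  have hgt : (Finset.sort s (· ≥ ·)).Pairwise (fun x y => y + 1 ≤ x) :=
    (hss.and hnd).imp (fun h => by omega)
  refine ⟨⟨by simp, ?_, ?_⟩, ?_, ?_, ?_⟩
  · rw [List.pairwise_cons]
    exact ⟨fun b hb => by have := hmem b hb; omega, hss⟩
  · intro x hx
    rcases List.mem_cons.mp hx with rfl | hx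
    · omega
    · exact (hmem x hx).1
  · simp only [perimeter, List.headI, List.length_cons, Finset.length_sort, hcard]
    omega
  · rw [DDistinct]; refine List.isChain_iff_pairwise.mpr ?_; rw [List.pairwise_cons]
    exact ⟨fun b hb => by have := hmem b hb; omega, hgt⟩
  · simp [hcard]; omega

theorem stmt3 (n k : ℕ) (hn : 0 < n) (hk : 0 < k) :
    Nat.card {l : List ℕ // IsPartition l ∧ perimeter l = n ∧ DDistinct 1 l ∧ l.length = k}
      = Nat.choose (n - k) (k - 1) := by
  rcases lt_or_ge n k with hkn | hkn
  · have h0 : IsEmpty {l : List ℕ // IsPartition l ∧ perimeter l = n ∧ DDistinct 1 l ∧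
        l.length = k} := by
      constructor
      rintro ⟨l, ⟨hne, hsort, hpos⟩, hper, hdd, hlen⟩
      obtain ⟨a, t, rfl⟩ : ∃ a t, l = a :: t := by
        cases l with
        | nil => exact absurd rfl hne
        | cons a t => exact ⟨a, t, rfl⟩
      have := hpos a (List.mem_cons_self (a := a) (l := t))
      simp only [perimeter, List.headI, List.length_cons] at hper hlen
      omega
    rw [Nat.card_of_isEmpty]
    have h1 : n - k = 0 := by omega
    rw [h1, Nat.choose_eq_zero_of_lt (by omega)]
  · have e : {l : List ℕ // IsPartition l ∧ perimeter l = n ∧ DDistinct 1 l ∧ l.length = k} ≃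
        {s : Finset ℕ // s ∈ Finset.powersetCard (k-1) (Finset.Ico 1 (n-k+1))} :=
      { toFun := fun x => ⟨x.1.tail.toFinset, (stmt3_fwd n k hk x.1 x.2).1⟩
        invFun := fun s => ⟨(n-k+1) :: Finset.sort s.1 (· ≥ ·), stmt3_bwd n k hk hkn s.1 s.2⟩
        left_inv := by
          rintro ⟨l, hl⟩
          exact Subtype.ext (stmt3_fwd n k hk l hl).2.symm
        right_inv := by
          rintro ⟨s, hs⟩
          exact Subtype.ext (by simp) }
    rw [Nat.card_congr e, Nat.card_eq_fintype_card, Fintype.card_coe,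
      Finset.card_powersetCard, Nat.card_Ico]
    simp
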